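/- Every power series F(z) ∈ ℂ[[z]] that is algebraic over ℂ(z) is D-finite: it satisfies a nontrivial homogeneous linear differential equation with polynomial coefficients. -/

import Mathlib

open PowerSeries

/-- `F` is algebraic over ℂ(z): `Σ_{i=0}^n c_i(z) F(z)^i = 0` with the `c_i`
polynomials, not all zero. -/
def IsAlgebraicPS (F : PowerSeries ℂ) : Prop :=
  ∃ (n : ℕ) (c : ℕ → Polynomial ℂ), (∃ i ≤ n, c i ≠ 0) ∧
    ∑ i ∈ Finset.range (n + 1), (c i : PowerSeries ℂ) * F ^ i = 0

/-- `F` is D-finite: it satisfies a nontrivial homogeneous linear differential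
equation with polynomial coefficients (formal derivatives). -/
def IsDFinite (F : PowerSeries ℂ) : Prop :=
  ∃ (m : ℕ) (p : ℕ → Polynomial ℂ), (∃ i ≤ m, p i ≠ 0) ∧
    ∑ i ∈ Finset.range (m + 1),
      (p i : PowerSeries ℂ) * (fun G => PowerSeries.derivativeFun G)^[i] F = 0

section AuxOuter
open Polynomial
open scoped RatFunc

set_option maxHeartbeats 1000000
set_option synthInstance.maxHeartbeats 1000000

noncomputable section AuxDFinite

/-- coefficient-wise `z`-derivative on `ℂ[z][y]` -/
def mapdz (G : Polynomial (Polynomial ℂ)) : Polynomial (Polynomial ℂ) :=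
  G.sum fun i c => Polynomial.monomial i (Polynomial.derivative c)

lemma mapdz_add (G H : Polynomial (Polynomial ℂ)) : mapdz (G + H) = mapdz G + mapdz H := by
  unfold mapdz
  rw [Polynomial.sum_add_index] <;> simp [map_add]

lemma mapdz_monomial (i : ℕ) (c : Polynomial ℂ) :
    mapdz (Polynomial.monomial i c) = Polynomial.monomial i (Polynomial.derivative c) := by
  unfold mapdz
  rw [Polynomial.sum_monomial_index]
  simp

lemma algebraMap_poly_ps (c : Polynomial ℂ) :
    algebraMap (Polynomial ℂ) (PowerSeries ℂ) c = (c : PowerSeries ℂ) := by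
  show Polynomial.coeToPowerSeries.algHom ℂ c = _
  rw [Polynomial.coeToPowerSeries.algHom_apply]
  simp

lemma derivFun_pow (F : PowerSeries ℂ) (i : ℕ) :
    derivativeFun (F ^ i) = i • (F ^ (i - 1) * derivativeFun F) := by
  have h := Derivation.leibniz_pow (PowerSeries.derivative ℂ) F (n := i)
  have h2 : ∀ x : PowerSeries ℂ, (PowerSeries.derivative ℂ) x = derivativeFun x := fun _ => rfl
  rw [h2, h2] at h
  rw [h, smul_eq_mul]

/-- Formal chain rule: `d/dz (G(z, F)) = (∂_z G)(F) + (∂_y G)(F) · F'`. -/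
lemma chain_rule (F : PowerSeries ℂ) (G : Polynomial (Polynomial ℂ)) :
    derivativeFun (Polynomial.aeval F G)
      = Polynomial.aeval F (mapdz G)
        + Polynomial.aeval F (Polynomial.derivative G) * derivativeFun F := by
  induction G using Polynomial.induction_on' with
  | add p q hp hq =>
      rw [map_add, derivativeFun_add, hp, hq, mapdz_add, map_add, Polynomial.derivative_add,
        map_add]
      ring
  | monomial i c =>
      rw [Polynomial.aeval_monomial, mapdz_monomial, Polynomial.derivative_monomial,
        Polynomial.aeval_monomial, Polynomial.aeval_monomial, derivativeFun_mul,
        derivFun_pow, map_mul, map_natCast, algebraMap_poly_ps, algebraMap_poly_ps,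
        show derivativeFun (c : PowerSeries ℂ) = (Polynomial.derivative c : PowerSeries ℂ) from
          derivative_coe c]
      simp only [smul_eq_mul, nsmul_eq_mul]
      ring

/-- The numerator polynomials in the recursion `Q^(2j) F^{(j)} = D_j(z, F)`. -/
def Dseq (P : Polynomial (Polynomial ℂ)) : ℕ → Polynomial (Polynomial ℂ)
  | 0 => Polynomial.X
  | (j + 1) =>
      (Polynomial.derivative P) ^ 2 * mapdz (Dseq P j)
        - Polynomial.derivative P * Polynomial.derivative (Dseq P j) * mapdz P
        - (2 * j) • ((Polynomial.derivative P * mapdz (Polynomial.derivative P)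
            - Polynomial.derivative (Polynomial.derivative P) * mapdz P) * Dseq P j)

lemma main_identity (F : PowerSeries ℂ) (P : Polynomial (Polynomial ℂ))
    (hPF : Polynomial.aeval F P = 0) (j : ℕ) :
    (Polynomial.aeval F (Polynomial.derivative P)) ^ (2 * j) * derivativeFun^[j] F
      = Polynomial.aeval F (Dseq P j) := by
  induction j with
  | zero => simp [Dseq]
  | succ j IH =>
    set A := Polynomial.derivative P with hA
    set Q := Polynomial.aeval F A with hQdef
    have hd0 : derivativeFun (0 : PowerSeries ℂ) = 0 := map_zero (PowerSeries.derivative ℂ)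
    have h1 : Q * derivativeFun F = - Polynomial.aeval F (mapdz P) := by
      have hc := chain_rule F P
      rw [hPF, hd0] at hc
      linear_combination -hc
    have hQd : derivativeFun Q
        = Polynomial.aeval F (mapdz A) + Polynomial.aeval F (Polynomial.derivative A)
          * derivativeFun F := chain_rule F A
    have hE1 := congrArg derivativeFun IH
    rw [derivativeFun_mul, derivFun_pow, chain_rule F (Dseq P j),
      ← Function.iterate_succ_apply' derivativeFun j F] at hE1
    simp only [smul_eq_mul, nsmul_eq_mul] at hE1
    have hpow : ((2 * j : ℕ) : PowerSeries ℂ) * Q ^ (2 * j - 1) * Q ^ 2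
        = ((2 * j : ℕ) : PowerSeries ℂ) * Q ^ (2 * j + 1) := by
      cases j with
      | zero => simp
      | succ m =>
        have e1 : 2 * (m + 1) - 1 = 2 * m + 1 := by omega
        have e2 : 2 * (m + 1) + 1 = (2 * m + 1) + 2 := by omega
        rw [e1, e2, pow_add]
        ring
    show Q ^ (2 * (j + 1)) * derivativeFun^[j + 1] F = Polynomial.aeval F (Dseq P (j + 1))
    rw [show Dseq P (j + 1)
        = A ^ 2 * mapdz (Dseq P j) - A * Polynomial.derivative (Dseq P j) * mapdz P
          - (2 * j) • ((A * mapdz A - Polynomial.derivative A * mapdz P) * Dseq P j) from rfl]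
    rw [map_sub, map_sub, map_mul, map_mul, map_mul, map_pow, map_nsmul, map_mul, map_sub,
      map_mul, map_mul]
    simp only [nsmul_eq_mul]
    set a := derivativeFun^[j + 1] F
    set b := derivativeFun^[j] F
    set v := derivativeFun F
    set dq := derivativeFun Q
    set m1 := Polynomial.aeval F (mapdz (Dseq P j))
    set m2 := Polynomial.aeval F (Polynomial.derivative (Dseq P j))
    set m3 := Polynomial.aeval F (mapdz A)
    set m4 := Polynomial.aeval F (Polynomial.derivative A)
    set m5 := Polynomial.aeval F (mapdz P)
    set dj := Polynomial.aeval F (Dseq P j)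
    set N := ((2 * j : ℕ) : PowerSeries ℂ)
    linear_combination Q ^ 2 * hE1 + Q * m2 * h1 - b * dq * hpow - N * Q * dq * IH
      - N * dj * Q * hQd - N * dj * m4 * h1

instance : IsScalarTower (Polynomial ℂ) (PowerSeries ℂ) (LaurentSeries ℂ) :=
  IsScalarTower.of_algebraMap_eq' rfl

end AuxDFinite

/-- Every power series algebraic over ℂ(z) is D-finite. -/
theorem algebraic_is_dfinite (F : PowerSeries ℂ) (halg : IsAlgebraicPS F) :
    IsDFinite F := by
  classical
  obtain ⟨n, c, ⟨i₀, hi₀n, hc₀⟩, hsum⟩ := halg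
  -- Step 1: find a nonzero annihilating polynomial of minimal degree
  set Pbig : Polynomial (Polynomial ℂ) :=
    ∑ i ∈ Finset.range (n + 1), Polynomial.C (c i) * Polynomial.X ^ i with hPbig
  have hPbigF : Polynomial.aeval F Pbig = 0 := by
    rw [hPbig, map_sum]
    simp only [map_mul, map_pow, Polynomial.aeval_C, Polynomial.aeval_X, algebraMap_poly_ps]
    exact hsum
  have hPbig0 : Pbig ≠ 0 := by
    intro h
    apply hc₀
    have hco := congrArg (fun qq => Polynomial.coeff qq i₀) h
    simp only [hPbig, Polynomial.finset_sum_coeff, Polynomial.coeff_C_mul,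
      Polynomial.coeff_X_pow, Polynomial.coeff_zero] at hco
    rw [Finset.sum_eq_single i₀] at hco
    · simpa using hco
    · intro b _ hb
      simp [Ne.symm hb]
    · intro hni
      exact absurd (Finset.mem_range.mpr (by omega)) hni
  have hex : ∃ dd, ∃ P : Polynomial (Polynomial ℂ),
      P ≠ 0 ∧ Polynomial.aeval F P = 0 ∧ P.natDegree ≤ dd :=
    ⟨Pbig.natDegree, Pbig, hPbig0, hPbigF, le_rfl⟩
  set d₀ := Nat.find hex with hd₀def
  obtain ⟨P, hP0, hPF, hPd⟩ := Nat.find_spec hex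
  have hmin : ∀ G : Polynomial (Polynomial ℂ), G ≠ 0 → Polynomial.aeval F G = 0 →
      d₀ ≤ G.natDegree := fun G h1 h2 => Nat.find_min' hex ⟨G, h1, h2, le_rfl⟩
  have hPdeg : P.natDegree = d₀ := le_antisymm hPd (hmin P hP0 hPF)
  have hd₀ : d₀ ≠ 0 := by
    intro h
    have hn0 : P.natDegree = 0 := by omega
    have hPC := Polynomial.eq_C_of_natDegree_eq_zero hn0
    rw [hPC, Polynomial.aeval_C, algebraMap_poly_ps] at hPF
    rw [Polynomial.coe_eq_zero_iff] at hPF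
    rw [hPC, hPF, map_zero] at hP0
    exact hP0 rfl
  set A := Polynomial.derivative P with hAdef
  have hA0 : A ≠ 0 := by
    intro h
    exact hd₀ (by rw [← hPdeg]; exact Polynomial.natDegree_eq_zero_of_derivative_eq_zero h)
  have hAdeg : A.natDegree < d₀ := by
    rw [← hPdeg]
    exact Polynomial.natDegree_derivative_lt (by omega)
  have hQ0 : Polynomial.aeval F A ≠ 0 := fun h => absurd (hmin A hA0 h) (by omega)
  -- Step 2: linear algebra over ℂ(z) inside Laurent series
  have hinj : Function.Injective (algebraMap (PowerSeries ℂ) (LaurentSeries ℂ)) :=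
    HahnSeries.ofPowerSeries_injective
  set Fb : (LaurentSeries ℂ) := algebraMap (PowerSeries ℂ) (LaurentSeries ℂ) F with hFbdef
  have hmap : ∀ G : Polynomial (Polynomial ℂ),
      Polynomial.aeval Fb G = algebraMap (PowerSeries ℂ) (LaurentSeries ℂ) (Polynomial.aeval F G) :=
    fun G => Polynomial.aeval_algebraMap_apply (LaurentSeries ℂ) F G
  set Pk : Polynomial (RatFunc ℂ) := P.map (algebraMap (Polynomial ℂ) (RatFunc ℂ)) with hPkdef
  have hPk0 : Pk ≠ 0 := by
    rw [hPkdef, Ne, Polynomial.map_eq_zero_iff (RatFunc.algebraMap_injective ℂ)]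
    exact hP0
  have hPkF : Polynomial.aeval Fb Pk = 0 := by
    rw [hPkdef, Polynomial.aeval_map_algebraMap, hmap, hPF, map_zero]
  have hint : IsIntegral (RatFunc ℂ) Fb := IsAlgebraic.isIntegral ⟨Pk, hPk0, hPkF⟩
  set L := IntermediateField.adjoin (RatFunc ℂ) {Fb} with hLdef
  haveI : FiniteDimensional (RatFunc ℂ) L := IntermediateField.adjoin.finiteDimensional hint
  have hmemaeval : ∀ G : Polynomial (Polynomial ℂ), Polynomial.aeval Fb G ∈ L := by
    intro G
    rw [← Polynomial.aeval_map_algebraMap (RatFunc ℂ)]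
    refine IntermediateField.algebra_adjoin_le_adjoin (RatFunc ℂ) {Fb} ?_
    rw [Algebra.adjoin_singleton_eq_range_aeval]
    exact ⟨_, rfl⟩
  set Qb : (LaurentSeries ℂ) := Polynomial.aeval Fb A with hQbdef
  have hQb0 : Qb ≠ 0 := by
    rw [hQbdef, hmap]
    intro h
    exact hQ0 (hinj (by rw [h, map_zero]))
  have hw : ∀ jj : ℕ, Qb ^ (2 * jj) * algebraMap (PowerSeries ℂ) (LaurentSeries ℂ) (derivativeFun^[jj] F)
      = Polynomial.aeval Fb (Dseq P jj) := by
    intro jj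
    rw [hmap, hQbdef, hmap, ← map_pow, ← map_mul, main_identity F P hPF jj]
  have hmem : ∀ jj : ℕ, algebraMap (PowerSeries ℂ) (LaurentSeries ℂ) (derivativeFun^[jj] F) ∈ L := by
    intro jj
    have h2 : algebraMap (PowerSeries ℂ) (LaurentSeries ℂ) (derivativeFun^[jj] F)
        = Qb⁻¹ ^ (2 * jj) * Polynomial.aeval Fb (Dseq P jj) := by
      rw [← hw jj, inv_pow]
      field_simp
    rw [h2]
    exact mul_mem (pow_mem (L.inv_mem (hmemaeval A)) _) (hmemaeval _)
  set d := Module.finrank (RatFunc ℂ) L with hddef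
  set w : ℕ → (LaurentSeries ℂ) := fun jj => algebraMap (PowerSeries ℂ) (LaurentSeries ℂ) (derivativeFun^[jj] F) with hwdef
  set vv : Fin (d + 1) → L := fun i => ⟨w i, hmem i⟩ with hvvdef
  have hnli : ¬ LinearIndependent (RatFunc ℂ) vv := by
    intro h
    have hcard := h.fintype_card_le_finrank
    rw [Fintype.card_fin] at hcard
    omega
  obtain ⟨g, hg0, i₁, hgi₁⟩ := Fintype.not_linearIndependent_iff.mp hnli
  have hsumK : ∑ i : Fin (d + 1), g i • w i = 0 := by
    have hcast := congrArg (L.val) hg0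
    rw [map_sum, map_zero] at hcast
    simpa [hvvdef] using hcast
  set q : Polynomial ℂ := ∏ i : Fin (d + 1), (g i).denom with hqdef
  set p : Fin (d + 1) → Polynomial ℂ :=
    fun i => (g i).num * ∏ i' ∈ Finset.univ.erase i, (g i').denom with hpdef
  have hkey : ∀ i, algebraMap (Polynomial ℂ) (RatFunc ℂ) (p i) = g i * algebraMap (Polynomial ℂ) (RatFunc ℂ) q := by
    intro i
    have hdn : algebraMap (Polynomial ℂ) (RatFunc ℂ) (g i).denom ≠ 0 := by
      intro h
      exact RatFunc.denom_ne_zero (g i) (RatFunc.algebraMap_injective ℂ (by rw [h, map_zero]))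
    have hde : q = (g i).denom * ∏ i' ∈ Finset.univ.erase i, (g i').denom :=
      (Finset.mul_prod_erase _ _ (Finset.mem_univ i)).symm
    rw [hpdef, map_mul, hde, map_mul, ← mul_assoc]
    congr 1
    calc algebraMap (Polynomial ℂ) (RatFunc ℂ) (g i).num
        = algebraMap (Polynomial ℂ) (RatFunc ℂ) (g i).num / algebraMap (Polynomial ℂ) (RatFunc ℂ) (g i).denom
            * algebraMap (Polynomial ℂ) (RatFunc ℂ) (g i).denom := (div_mul_cancel₀ _ hdn).symm
      _ = g i * algebraMap (Polynomial ℂ) (RatFunc ℂ) (g i).denom := by rw [RatFunc.num_div_denom]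
  have hbig : ∑ i : Fin (d + 1), ((p i : PowerSeries ℂ)) * derivativeFun^[(i : ℕ)] F = 0 := by
    apply hinj
    rw [map_sum, map_zero]
    have hterm : ∀ i : Fin (d + 1),
        algebraMap (PowerSeries ℂ) (LaurentSeries ℂ) ((p i : PowerSeries ℂ) * derivativeFun^[(i : ℕ)] F)
          = algebraMap (RatFunc ℂ) (LaurentSeries ℂ) (algebraMap (Polynomial ℂ) (RatFunc ℂ) q) * (g i • w i) := by
      intro i
      rw [map_mul]
      have t1 : algebraMap (PowerSeries ℂ) (LaurentSeries ℂ) ((p i : PowerSeries ℂ))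
          = algebraMap (Polynomial ℂ) (LaurentSeries ℂ) (p i) := by
        rw [IsScalarTower.algebraMap_apply (Polynomial ℂ) (PowerSeries ℂ) (LaurentSeries ℂ), algebraMap_poly_ps]
      rw [t1, IsScalarTower.algebraMap_apply (Polynomial ℂ) (RatFunc ℂ) (LaurentSeries ℂ), hkey i, map_mul,
        Algebra.smul_def]
      show algebraMap (RatFunc ℂ) (LaurentSeries ℂ) (g i) * algebraMap (RatFunc ℂ) (LaurentSeries ℂ) (algebraMap (Polynomial ℂ) (RatFunc ℂ) q)
          * w (i : ℕ) = _
      ring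
    rw [Finset.sum_congr rfl (fun i _ => hterm i), ← Finset.mul_sum, hsumK, mul_zero]
  refine ⟨d, fun nn => if h : nn < d + 1 then p ⟨nn, h⟩ else 0, ⟨i₁, by omega, ?_⟩, ?_⟩
  · show (if h : (i₁ : ℕ) < d + 1 then p ⟨(i₁ : ℕ), h⟩ else 0) ≠ 0
    rw [dif_pos i₁.isLt]
    simp only [Fin.eta]
    exact mul_ne_zero (RatFunc.num_ne_zero hgi₁)
      (Finset.prod_ne_zero_iff.mpr fun _ _ => RatFunc.denom_ne_zero _)
  · rw [Finset.sum_range]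
    have hco : ∀ i : Fin (d + 1),
        (((if h : (i : ℕ) < d + 1 then p ⟨(i : ℕ), h⟩ else 0 : Polynomial ℂ)) : PowerSeries ℂ)
            * (fun G => PowerSeries.derivativeFun G)^[(i : ℕ)] F
          = ((p i : PowerSeries ℂ)) * derivativeFun^[(i : ℕ)] F := by
      intro i
      rw [dif_pos i.isLt]
    rw [Finset.sum_congr rfl fun i _ => hco i]
    exact hbig

end AuxOuter
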